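/- Let q(x,y) = ax² + bxy + cy² be a primitive integral binary quadratic form with discriminant d = b² − 4ac > 0 not a perfect square, let n = 1 or n = −1, and set Q = n·!![2a, b; b, 2c]. Let (U,V) be the minimal positive solution of x² − dy² = 4 and u the corresponding automorph. Then u² induces the identity on the discriminant group of Q, i.e. the rational matrix (u² − I)·Q⁻¹ has integer entries. -/

import Mathlib

open Matrix

/-- for `n = ±1`, the square `u²` of the fundamental automorph
induces the identity on the discriminant group of `Q = n·!![2a, b; b, 2c]`. -/
theorem sq_automorph_trivial_on_discriminant
    (a b c n : ℤ) (hn : n = 1 ∨ n = -1)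
    (hprim : Int.gcd a (Int.gcd b c) = 1)
    (d : ℤ) (hd : d = b ^ 2 - 4 * a * c) (hdpos : 0 < d)
    (hdsq : ¬ ∃ m : ℤ, m * m = d)
    (U V : ℤ) (hU : 0 < U) (hV : 0 < V) (hUV : U ^ 2 - d * V ^ 2 = 4)
    (hmin : ∀ x y : ℤ, 0 < x → 0 < y → x ^ 2 - d * y ^ 2 = 4 → U ≤ x)
    (u : Matrix (Fin 2) (Fin 2) ℤ)
    (hu : u = !![(U - b * V) / 2, -c * V; a * V, (U + b * V) / 2])
    (Q : Matrix (Fin 2) (Fin 2) ℤ) (hQ : Q = n • !![2 * a, b; b, 2 * c]) :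
    ∀ i j : Fin 2, ∃ m : ℤ,
      (((u ^ 2).map (Int.cast : ℤ → ℚ) - 1) *
        (Q.map (Int.cast : ℤ → ℚ))⁻¹) i j = (m : ℚ) := by
  have hDV : (U - b*V)*(U+b*V) = 4 - 4*a*c*V^2 := by linear_combination hUV + V^2*hd
  have hev : Even ((U - b*V)*(U+b*V)) := ⟨2 - 2*a*c*V^2, by linarith⟩
  obtain ⟨k, hk⟩ : ∃ k, U = 2*k + b*V := by
    rcases Int.even_mul.mp hev with ⟨r,hr⟩|⟨r,hr⟩
    · exact ⟨r, by omega⟩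
    · exact ⟨r - b*V, by omega⟩
  subst hk hu hQ hd
  have hdet : (k:ℚ)^2 + b*V*k + a*c*V^2 = 1 := by
    have h4 : 4*(k^2 + b*V*k + a*c*V^2) = 4 := by linear_combination hUV
    have : k^2 + b*V*k + a*c*V^2 = 1 := by linarith
    exact_mod_cast this
  have e1 : (2*k + b*V - b*V)/2 = k := by omega
  have e2 : (2*k + b*V + b*V)/2 = k + b*V := by omega
  rw [e1, e2]
  have hD : ((b:ℚ)^2 - 4*a*c) ≠ 0 := by
    have : (0:ℚ) < (b:ℚ)^2 - 4*a*c := by exact_mod_cast hdpos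
    linarith
  have hQinv : (((n • !![2 * a, b; b, 2 * c] : Matrix (Fin 2) (Fin 2) ℤ)).map
      (Int.cast : ℤ → ℚ))⁻¹ =
      !![(-2*n*c)/((b:ℚ)^2-4*a*c), n*b/((b:ℚ)^2-4*a*c);
         n*b/((b:ℚ)^2-4*a*c), (-2*n*a)/((b:ℚ)^2-4*a*c)] := by
    apply Matrix.inv_eq_right_inv
    rcases hn with rfl | rfl <;>
    · ext i j
      fin_cases i <;> fin_cases j <;>
        simp [Matrix.mul_apply, Fin.sum_univ_two, Matrix.one_apply] <;>
        field_simp [show (b:ℚ) ^ 2 - a * c * 4 ≠ 0 by intro h; apply hD; linear_combination h] <;> ring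
  rw [hQinv]
  intro i j
  fin_cases i <;> fin_cases j
  · exact ⟨-n*c*V^2, by
      simp [pow_two, Matrix.mul_apply, Fin.sum_univ_two, Matrix.one_apply]
      field_simp
      rw [div_eq_iff (by intro h; apply hD; linear_combination h)]
      linear_combination (-2*(n:ℚ)*c) * hdet⟩
  · exact ⟨-n*V*k, by
      simp [pow_two, Matrix.mul_apply, Fin.sum_univ_two, Matrix.one_apply]
      field_simp
      rw [div_eq_iff (by intro h; apply hD; linear_combination h)]
      linear_combination ((n:ℚ)*b) * hdet⟩
  · exact ⟨n*V*(k + b*V), by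
      simp [pow_two, Matrix.mul_apply, Fin.sum_univ_two, Matrix.one_apply]
      field_simp
      rw [div_eq_iff (by intro h; apply hD; linear_combination h)]
      linear_combination ((n:ℚ)*b) * hdet⟩
  · exact ⟨-n*a*V^2, by
      simp [pow_two, Matrix.mul_apply, Fin.sum_univ_two, Matrix.one_apply]
      field_simp
      rw [div_eq_iff (by intro h; apply hD; linear_combination h)]
      linear_combination (-2*(n:ℚ)*a) * hdet⟩
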